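/- Let E be a Banach space without the Schur property, let 1 < p < ∞, suppose F is a Banach space admitting a bounded linear surjection onto ℓ_p, and suppose every bounded linear operator from E into F* is completely continuous. Then the projective tensor product E ⊗̂π F does not have the Dunford–Pettis property. -/

import Mathlib

open Filter Topology MeasureTheory

/-- A sequence in a normed space is *weakly null* if it converges to `0` in the weak topology,
i.e. `φ (x n) → 0` for every continuous linear functional `φ`. -/
def WeaklyNull {E : Type*} [NormedAddCommGroup E] [NormedSpace ℝ E] (x : ℕ → E) : Prop :=
  ∀ φ : E →L[ℝ] ℝ, Tendsto (fun n => φ (x n)) atTop (𝓝 0)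

/-- An operator is *completely continuous* if it maps weakly convergent sequences to norm
convergent sequences. -/
def CompletelyContinuous {E F : Type*} [NormedAddCommGroup E] [NormedSpace ℝ E]
    [NormedAddCommGroup F] [NormedSpace ℝ F] (T : E →L[ℝ] F) : Prop :=
  ∀ (x : ℕ → E) (x₀ : E),
    (∀ φ : E →L[ℝ] ℝ, Tendsto (fun n => φ (x n)) atTop (𝓝 (φ x₀))) →
    Tendsto (fun n => T (x n)) atTop (𝓝 (T x₀))

/-- A Banach space has the *Schur property* if every weakly null sequence is norm null. -/
def SchurProperty (E : Type*) [NormedAddCommGroup E] [NormedSpace ℝ E] : Prop :=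
  ∀ x : ℕ → E, WeaklyNull x → Tendsto x atTop (𝓝 0)

/-- A Banach space has the *Dunford–Pettis property* if `φₙ(xₙ) → 0` whenever `(xₙ)` is weakly
null in `E` and `(φₙ)` is weakly null in the dual `E*`. -/
def DunfordPettisProperty (E : Type*) [NormedAddCommGroup E] [NormedSpace ℝ E] : Prop :=
  ∀ (x : ℕ → E) (φ : ℕ → E →L[ℝ] ℝ), WeaklyNull x → WeaklyNull φ →
    Tendsto (fun n => φ n (x n)) atTop (𝓝 0)

/-- `F` contains a (closed, isomorphic) copy of `X`: there is an isomorphic embedding of `X`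
into `F` (its range is automatically a closed subspace when `X` is complete). -/
def ContainsCopy (F X : Type*) [NormedAddCommGroup F] [NormedSpace ℝ F]
    [NormedAddCommGroup X] [NormedSpace ℝ X] : Prop :=
  ∃ (e : X →L[ℝ] F) (c : ℝ), 0 < c ∧ ∀ x, c * ‖x‖ ≤ ‖e x‖

/-- `F` contains a *complemented* copy of `X`: there is an embedding `e : X → F` admitting a
bounded linear left inverse (equivalently, a complemented closed subspace isomorphic to `X`). -/
def ContainsComplementedCopy (F X : Type*) [NormedAddCommGroup F] [NormedSpace ℝ F]
    [NormedAddCommGroup X] [NormedSpace ℝ X] : Prop :=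
  ∃ (e : X →L[ℝ] F) (r : F →L[ℝ] X), r.comp e = ContinuousLinearMap.id ℝ X

/-- A realization of the projective tensor product `E ⊗̂π F` as a Banach space `X`:
a bounded bilinear map `tmul` of norm `≤ 1` whose range spans a dense subspace, and such that
every bounded bilinear form on `E × F` lifts to a functional on `X` of no greater norm.
Together with completeness of `X`, these properties characterize `E ⊗̂π F` up to isometric
isomorphism. -/
structure ProjectiveTensorProduct (X E F : Type*) [NormedAddCommGroup X] [NormedSpace ℝ X]
    [NormedAddCommGroup E] [NormedSpace ℝ E] [NormedAddCommGroup F] [NormedSpace ℝ F] where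
  tmul : E →L[ℝ] F →L[ℝ] X
  norm_tmul_le : ∀ x y, ‖tmul x y‖ ≤ ‖x‖ * ‖y‖
  dense_span : Dense (↑(Submodule.span ℝ (Set.range fun p : E × F => tmul p.1 p.2)) : Set X)
  lift : ∀ B : E →L[ℝ] F →L[ℝ] ℝ, ∃ φ : X →L[ℝ] ℝ, ‖φ‖ ≤ ‖B‖ ∧ ∀ x y, φ (tmul x y) = B x y

/-- A realization of the injective tensor product `E ⊗̂ε F` as a Banach space `X`:
a bilinear map `tmul` whose range spans a dense subspace and such that the norm of any finite
sum of elementary tensors is the injective norm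
`sup { |Σ φ(xᵢ) ψ(yᵢ)| : ‖φ‖ ≤ 1, ‖ψ‖ ≤ 1 }`.  Together with completeness of `X`, these
properties characterize `E ⊗̂ε F` up to isometric isomorphism. -/
structure InjectiveTensorProduct (X E F : Type*) [NormedAddCommGroup X] [NormedSpace ℝ X]
    [NormedAddCommGroup E] [NormedSpace ℝ E] [NormedAddCommGroup F] [NormedSpace ℝ F] where
  tmul : E →L[ℝ] F →L[ℝ] X
  dense_span : Dense (↑(Submodule.span ℝ (Set.range fun p : E × F => tmul p.1 p.2)) : Set X)
  norm_sum : ∀ (n : ℕ) (x : Fin n → E) (y : Fin n → F),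
    ‖∑ i, tmul (x i) (y i)‖ =
      sSup { r : ℝ | ∃ (φ : E →L[ℝ] ℝ) (ψ : F →L[ℝ] ℝ), ‖φ‖ ≤ 1 ∧ ‖ψ‖ ≤ 1 ∧
        r = |∑ i, φ (x i) * ψ (y i)| }

/-- The Banach space `ℓ₁` of absolutely summable real sequences. -/
noncomputable abbrev ellOne : Type := lp (fun _ : ℕ => ℝ) 1

section Aux

/-- Numeric core lemma. -/
lemma tendsto_zero_of_pairing_bound {r r' M : ℝ} (hrr : r.HolderConjugate r') (hM : 0 ≤ M)
    (c : ℕ → ℝ)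
    (hbound : ∀ ξ : ℕ → ℝ, ∀ N : ℕ,
      |∑ n ∈ Finset.range N, ξ n * c n| ≤
        M * (∑ n ∈ Finset.range N, |ξ n| ^ r') ^ (1 / r')) :
    Tendsto c atTop (𝓝 0) := by
  have hr1 : 1 < r := hrr.lt
  have hr0 : 0 < r := hrr.pos
  have hr'0 : 0 < r' := hrr.symm.pos
  set d : ℕ → ℝ := fun n => |c n| ^ r with hd
  have hdnn : ∀ n, 0 ≤ d n := fun n => Real.rpow_nonneg (abs_nonneg _) _
  have hsum : ∀ N, ∑ n ∈ Finset.range N, d n ≤ M ^ r := by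
    intro N
    set ξ : ℕ → ℝ := fun n => (if 0 ≤ c n then (1:ℝ) else -1) * |c n| ^ (r - 1) with hξ
    have hξc : ∀ n, ξ n * c n = d n := by
      intro n
      rcases eq_or_ne (c n) 0 with h0 | h0
      · simp [hξ, hd, h0, Real.zero_rpow hr0.ne', Real.zero_rpow (sub_pos.mpr hr1).ne']
      · have habs : 0 < |c n| := abs_pos.mpr h0
        have : (if 0 ≤ c n then (1:ℝ) else -1) * c n = |c n| := by
          rcases le_or_gt 0 (c n) with h | h
          · simp [h, abs_of_nonneg h]
          · simp [not_le.mpr h, abs_of_neg h]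
        calc ξ n * c n = |c n| ^ (r - 1) * ((if 0 ≤ c n then (1:ℝ) else -1) * c n) := by
              rw [hξ]; ring
          _ = |c n| ^ (r - 1) * |c n| ^ (1:ℝ) := by rw [this, Real.rpow_one]
          _ = d n := by rw [← Real.rpow_add habs, sub_add_cancel]
    have hξr : ∀ n, |ξ n| ^ r' = d n := by
      intro n
      have hnn : 0 ≤ |c n| ^ (r - 1) := Real.rpow_nonneg (abs_nonneg _) _
      have h1 : |ξ n| = |c n| ^ (r - 1) := by
        rcases le_or_gt 0 (c n) with h | h
        · simp [hξ, h, abs_of_nonneg hnn]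
        · show |(if 0 ≤ c n then (1:ℝ) else -1) * |c n| ^ (r - 1)| = _
          rw [if_neg (not_le.mpr h), neg_one_mul, abs_neg, abs_of_nonneg hnn]
      rw [h1, ← Real.rpow_mul (abs_nonneg _), hrr.sub_one_mul_conj]
    set S : ℝ := ∑ n ∈ Finset.range N, d n with hS
    have hSnn : 0 ≤ S := Finset.sum_nonneg fun n _ => hdnn n
    have key : S ≤ M * S ^ (1 / r') := by
      have h1 : ∑ n ∈ Finset.range N, ξ n * c n = S := Finset.sum_congr rfl fun n _ => hξc n
      have h2 : ∑ n ∈ Finset.range N, |ξ n| ^ r' = S := Finset.sum_congr rfl fun n _ => hξr n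
      have := hbound ξ N
      rw [h1, h2] at this
      exact (le_abs_self S).trans this
    rcases eq_or_lt_of_le hSnn with h0 | h0
    · rw [← h0]; exact Real.rpow_nonneg hM r
    · have hSr' : 0 < S ^ (1 / r') := Real.rpow_pos_of_pos h0 _
      have h3 : S ^ (r⁻¹ : ℝ) ≤ M := by
        have hdiv : S / S ^ (r'⁻¹ : ℝ) ≤ M := by
          rw [div_le_iff₀ (by rw [← one_div]; exact hSr')]
          simpa [one_div] using key
        have heq : S ^ (r⁻¹ : ℝ) = S / S ^ (r'⁻¹ : ℝ) := by
          rw [← hrr.symm.one_sub_inv, Real.rpow_sub h0, Real.rpow_one]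
        rw [heq]; exact hdiv
      calc S = (S ^ (r⁻¹ : ℝ)) ^ r := (Real.rpow_inv_rpow hSnn hr0.ne').symm
        _ ≤ M ^ r := Real.rpow_le_rpow (Real.rpow_nonneg hSnn _) h3 hr0.le
  have hsummable : Summable d := summable_of_sum_range_le hdnn hsum
  have hd0 : Tendsto d atTop (𝓝 0) := hsummable.tendsto_atTop_zero
  have hten : Tendsto (fun n => (d n) ^ (r⁻¹ : ℝ)) atTop (𝓝 0) := by
    have := hd0.rpow_const (p := r⁻¹) (Or.inr (inv_nonneg.mpr hr0.le))
    rwa [Real.zero_rpow (inv_ne_zero hr0.ne')] at this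
  refine squeeze_zero_norm (fun n => ?_) hten
  have := Real.rpow_rpow_inv (abs_nonneg (c n)) hr0.ne'
  simpa [Real.norm_eq_abs, hd] using this.ge

/-- The `n`-th coordinate functional on `ℓ_p`. -/
noncomputable def lpCoord (p : ENNReal) [Fact (1 ≤ p)] (n : ℕ) :
    lp (fun _ : ℕ => ℝ) p →L[ℝ] ℝ :=
  LinearMap.mkContinuous
    { toFun := fun f => f n
      map_add' := fun f g => by
        have := lp.coeFn_add f g
        simp [congrFun this n]
      map_smul' := fun c f => by
        have := lp.coeFn_smul c f
        simp [congrFun this n] }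
    1 (fun f => by
      have hp : p ≠ 0 := by
        have h1 : (1:ENNReal) ≤ p := Fact.out
        exact (lt_of_lt_of_le zero_lt_one h1).ne'
      simpa using lp.norm_apply_le_norm hp f n)

@[simp] lemma lpCoord_apply (p : ENNReal) [Fact (1 ≤ p)] (n : ℕ) (f : lp (fun _ : ℕ => ℝ) p) :
    lpCoord p n f = f n := rfl

lemma lpCoord_single (p : ENNReal) [Fact (1 ≤ p)] (n : ℕ) :
    lpCoord p n (lp.single p n (1:ℝ)) = 1 := by
  rw [lpCoord_apply, lp.single_apply_self]

lemma norm_lp_single_one (p : ENNReal) [Fact (1 ≤ p)] (hp : 0 < p.toReal) (n : ℕ) :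
    ‖(lp.single p n (1:ℝ) : lp (fun _ : ℕ => ℝ) p)‖ = 1 := by
  have h := lp.norm_single (E := fun _ : ℕ => ℝ) (p := p) (ENNReal.toReal_pos_iff.mp hp).1 n (1:ℝ)
  rw [h, norm_one]

end Aux

/-- Uniqueness of functionals determined on elementary tensors. -/
lemma ProjectiveTensorProduct.funext_tmul {X E F : Type*} [NormedAddCommGroup X]
    [NormedSpace ℝ X] [NormedAddCommGroup E] [NormedSpace ℝ E] [NormedAddCommGroup F]
    [NormedSpace ℝ F] (h : ProjectiveTensorProduct X E F) {φ ψ : X →L[ℝ] ℝ}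
    (hagree : ∀ x y, φ (h.tmul x y) = ψ (h.tmul x y)) : φ = ψ := by
  refine ContinuousLinearMap.ext_on h.dense_span ?_
  rintro _ ⟨⟨x, y⟩, rfl⟩
  exact hagree x y


/-- If `E` is not Schur, `F` has a quotient map onto `ℓ_p` (`1 < p < ∞`), and every operator
`E → F*` is completely continuous, then `E ⊗̂π F` fails the Dunford–Pettis property. -/
theorem projectiveTensorProduct_not_dunfordPettis_of_surj_lp
    {E F X : Type*} [NormedAddCommGroup E] [NormedSpace ℝ E] [CompleteSpace E]
    [NormedAddCommGroup F] [NormedSpace ℝ F] [CompleteSpace F]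
    [NormedAddCommGroup X] [NormedSpace ℝ X] [CompleteSpace X]
    (p : ENNReal) [Fact (1 ≤ p)] (hp₁ : 1 < p) (hp₂ : p ≠ ⊤)
    (h : ProjectiveTensorProduct X E F)
    (hE : ¬ SchurProperty E)
    (hq : ∃ q : F →L[ℝ] lp (fun _ : ℕ => ℝ) p, Function.Surjective q)
    (hcc : ∀ T : E →L[ℝ] (F →L[ℝ] ℝ), CompletelyContinuous T) :
    ¬ DunfordPettisProperty X := by
  intro hDP
  -- exponents
  set r : ℝ := p.toReal with hrdef
  have hr1 : 1 < r := by
    have := (ENNReal.toReal_lt_toReal (by simp) hp₂).mpr hp₁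
    simpa using this
  have hr0 : 0 < r := lt_trans zero_lt_one hr1
  have hconj : r.HolderConjugate (Real.conjExponent r) := Real.HolderConjugate.conjExponent hr1
  set r' : ℝ := Real.conjExponent r with hr'def
  -- weakly null non-norm-null sequence
  simp only [SchurProperty, not_forall] at hE
  obtain ⟨a, ha, hna⟩ := hE
  have hex : ∃ ε > 0, ∃ᶠ n in atTop, ε ≤ ‖a n‖ := by
    by_contra hcon
    push_neg at hcon
    apply hna
    rw [NormedAddCommGroup.tendsto_nhds_zero]
    intro δ hδ
    have hδ' := hcon δ hδ
    exact hδ'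
  obtain ⟨ε, hε, hfreq⟩ := hex
  obtain ⟨σ, hσmono, hσ⟩ := Filter.extraction_of_frequently_atTop hfreq
  set b : ℕ → E := a ∘ σ with hbdef
  have hb : WeaklyNull b := fun ψ => (ha ψ).comp hσmono.tendsto_atTop
  have hbε : ∀ n, ε ≤ ‖b n‖ := fun n => hσ n
  have hbne : ∀ n, b n ≠ 0 := by
    intro n h0
    have := hbε n
    rw [h0, norm_zero] at this
    linarith
  choose g hg1 hg2 using fun n => exists_dual_vector ℝ (b n) (norm_ne_zero_iff.mpr (hbne n))
  -- quotient map data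
  obtain ⟨q, hqsurj⟩ := hq
  obtain ⟨C, hC0, hCp⟩ := ContinuousLinearMap.exists_preimage_norm_le q hqsurj
  set e : ℕ → lp (fun _ : ℕ => ℝ) p := fun n => lp.single p n (1:ℝ) with hedef
  have hen : ∀ n, ‖e n‖ = 1 := fun n =>
    norm_lp_single_one p (ENNReal.toReal_pos (lt_trans zero_lt_one hp₁).ne' hp₂) n
  choose y hyq hyC using fun n => hCp (e n)
  have hyCn : ∀ n, ‖y n‖ ≤ C := by
    intro n
    have := hyC n
    rwa [hen n, mul_one] at this
  -- the bilinear forms and lifted functionals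
  set Bn : ℕ → (E →L[ℝ] F →L[ℝ] ℝ) :=
    fun n => (g n).smulRight ((lpCoord p n).comp q) with hBndef
  choose φ hφn hφt using fun n => h.lift (Bn n)
  set x : ℕ → X := fun n => h.tmul (b n) (y n) with hxdef
  -- x is weakly null
  have hx_null : WeaklyNull x := by
    intro ψ
    set T : E →L[ℝ] F →L[ℝ] ℝ := (ContinuousLinearMap.compL ℝ F X ℝ ψ).comp h.tmul with hTdef
    have hTcc := hcc T b 0 (by
      intro φ'
      rw [map_zero]
      exact hb φ')
    rw [map_zero] at hTcc
    have hTn : Tendsto (fun n => ‖T (b n)‖) atTop (𝓝 0) := by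
      simpa using hTcc.norm
    refine squeeze_zero_norm (fun n => ?_) (f := fun n => ψ (x n))
      (a := fun n => ‖T (b n)‖ * C) (by simpa using hTn.mul_const C)
    show ‖ψ (x n)‖ ≤ ‖T (b n)‖ * C
    have h1 : ψ (x n) = (T (b n)) (y n) := by
      simp [hTdef, hxdef, ContinuousLinearMap.compL_apply]
    rw [h1]
    calc ‖(T (b n)) (y n)‖ ≤ ‖T (b n)‖ * ‖y n‖ := ContinuousLinearMap.le_opNorm _ _
      _ ≤ ‖T (b n)‖ * C := by
          exact mul_le_mul_of_nonneg_left (hyCn n) (norm_nonneg _)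
  -- φ is weakly null
  have hφ_null : WeaklyNull φ := by
    intro Φ
    refine tendsto_zero_of_pairing_bound hconj
      (mul_nonneg (norm_nonneg Φ) (norm_nonneg q)) _ (fun ξ N => ?_)
    set K : ℝ := (∑ n ∈ Finset.range N, |ξ n| ^ r') ^ (1 / r') with hKdef
    have hKnn : 0 ≤ K :=
      Real.rpow_nonneg (Finset.sum_nonneg fun n _ => Real.rpow_nonneg (abs_nonneg _) _) _
    set B' : E →L[ℝ] F →L[ℝ] ℝ := ∑ n ∈ Finset.range N, ξ n • Bn n with hB'def
    set Ψ : X →L[ℝ] ℝ := ∑ n ∈ Finset.range N, ξ n • φ n with hΨdef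
    have hΨt : ∀ u v, Ψ (h.tmul u v) = B' u v := by
      intro u v
      simp only [hΨdef, hB'def, ContinuousLinearMap.sum_apply, ContinuousLinearMap.smul_apply]
      exact Finset.sum_congr rfl fun n _ => by rw [hφt n u v]
    obtain ⟨φ', hφ'n, hφ't⟩ := h.lift B'
    have hΨφ' : Ψ = φ' := h.funext_tmul fun u v => by rw [hΨt u v, hφ't u v]
    -- operator norm estimate for B'
    have hB'norm : ‖B'‖ ≤ ‖q‖ * K := by
      refine ContinuousLinearMap.opNorm_le_bound _ (mul_nonneg (norm_nonneg q) hKnn) (fun u => ?_)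
      refine ContinuousLinearMap.opNorm_le_bound _
        (mul_nonneg (mul_nonneg (norm_nonneg q) hKnn) (norm_nonneg u)) (fun v => ?_)
      have hBv : B' u v = ∑ n ∈ Finset.range N, ξ n * (g n u * (q v : ∀ _ : ℕ, ℝ) n) := by
        simp [hB'def, hBndef]
      have hqsum : (∑ n ∈ Finset.range N, |(q v : ∀ _ : ℕ, ℝ) n| ^ r) ^ (1 / r) ≤ ‖q v‖ := by
        have h1 : ∑ n ∈ Finset.range N, ‖(q v : ∀ _ : ℕ, ℝ) n‖ ^ r ≤ ‖q v‖ ^ r :=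
          lp.sum_rpow_le_norm_rpow (by rw [← hrdef]; exact hr0) (q v) (Finset.range N)
        have h2 : (∑ n ∈ Finset.range N, |(q v : ∀ _ : ℕ, ℝ) n| ^ r) ^ (1 / r)
            ≤ (‖q v‖ ^ r) ^ (1 / r) := by
          apply Real.rpow_le_rpow (Finset.sum_nonneg fun n _ => Real.rpow_nonneg (abs_nonneg _) _)
            _ (by positivity)
          simpa [Real.norm_eq_abs] using h1
        rw [one_div]
        rwa [one_div, Real.rpow_rpow_inv (norm_nonneg _) hr0.ne'] at h2
      have hH : ∑ n ∈ Finset.range N, |ξ n| * |(q v : ∀ _ : ℕ, ℝ) n| ≤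
          K * (∑ n ∈ Finset.range N, |(q v : ∀ _ : ℕ, ℝ) n| ^ r) ^ (1 / r) := by
        have := Real.inner_le_Lp_mul_Lq (Finset.range N)
          (fun n => |ξ n|) (fun n => |(q v : ∀ _ : ℕ, ℝ) n|) hconj.symm
        simpa [abs_abs, hKdef] using this
      rw [hBv, Real.norm_eq_abs]
      calc |∑ n ∈ Finset.range N, ξ n * (g n u * (q v : ∀ _ : ℕ, ℝ) n)|
          ≤ ∑ n ∈ Finset.range N, |ξ n * (g n u * (q v : ∀ _ : ℕ, ℝ) n)| :=
            Finset.abs_sum_le_sum_abs _ _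
        _ ≤ ∑ n ∈ Finset.range N, ‖u‖ * (|ξ n| * |(q v : ∀ _ : ℕ, ℝ) n|) := by
            refine Finset.sum_le_sum fun n _ => ?_
            rw [abs_mul, abs_mul]
            have hgn : |g n u| ≤ ‖u‖ := by
              have := (g n).le_opNorm u
              rwa [hg1 n, one_mul, Real.norm_eq_abs] at this
            calc |ξ n| * (|g n u| * |(q v : ∀ _ : ℕ, ℝ) n|)
                ≤ |ξ n| * (‖u‖ * |(q v : ∀ _ : ℕ, ℝ) n|) := by
                  apply mul_le_mul_of_nonneg_left _ (abs_nonneg _)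
                  exact mul_le_mul_of_nonneg_right hgn (abs_nonneg _)
              _ = ‖u‖ * (|ξ n| * |(q v : ∀ _ : ℕ, ℝ) n|) := by ring
        _ = ‖u‖ * ∑ n ∈ Finset.range N, |ξ n| * |(q v : ∀ _ : ℕ, ℝ) n| := by
            rw [Finset.mul_sum]
        _ ≤ ‖u‖ * (K * (∑ n ∈ Finset.range N, |(q v : ∀ _ : ℕ, ℝ) n| ^ r) ^ (1 / r)) := by
            exact mul_le_mul_of_nonneg_left hH (norm_nonneg u)
        _ ≤ ‖u‖ * (K * (‖q‖ * ‖v‖)) := by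
            refine mul_le_mul_of_nonneg_left ?_ (norm_nonneg u)
            refine mul_le_mul_of_nonneg_left ?_ hKnn
            exact hqsum.trans (q.le_opNorm v)
        _ = ‖q‖ * K * ‖u‖ * ‖v‖ := by ring
    -- conclude the pairing bound
    have hval : Φ Ψ = ∑ n ∈ Finset.range N, ξ n * Φ (φ n) := by
      rw [hΨdef, map_sum]
      exact Finset.sum_congr rfl fun n _ => by rw [_root_.map_smul, smul_eq_mul]
    calc |∑ n ∈ Finset.range N, ξ n * Φ (φ n)| = |Φ Ψ| := by rw [hval]
      _ ≤ ‖Φ‖ * ‖Ψ‖ := by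
          have := Φ.le_opNorm Ψ
          rwa [Real.norm_eq_abs] at this
      _ ≤ ‖Φ‖ * (‖q‖ * K) := by
          refine mul_le_mul_of_nonneg_left ?_ (norm_nonneg Φ)
          rw [hΨφ']
          exact hφ'n.trans hB'norm
      _ = ‖Φ‖ * ‖q‖ * K := by ring
  -- the pairing does not tend to zero
  have hval : ∀ n, φ n (x n) = ‖b n‖ := by
    intro n
    rw [hxdef]
    show φ n (h.tmul (b n) (y n)) = ‖b n‖
    rw [hφt n (b n) (y n), hBndef]
    show (g n (b n)) • ((lpCoord p n).comp q) (y n) = ‖b n‖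
    rw [ContinuousLinearMap.comp_apply, hyq n]
    show (g n (b n)) • lpCoord p n (e n) = ‖b n‖
    rw [hedef]
    show (g n (b n)) • lpCoord p n (lp.single p n (1:ℝ)) = ‖b n‖
    rw [lpCoord_single, smul_eq_mul, mul_one]
    exact hg2 n
  have hDPc := hDP x φ hx_null hφ_null
  rw [NormedAddCommGroup.tendsto_nhds_zero] at hDPc
  obtain ⟨n, hn⟩ := (hDPc ε hε).exists
  rw [hval n, Real.norm_eq_abs, abs_of_nonneg (norm_nonneg _)] at hn
  exact absurd hn (not_lt.mpr (hbε n))
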